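/- arXiv:2012.10469 — 7 statements merged into one kernel-verified Lean document; each statement's English description precedes it below -/
import Mathlib

section
/- Von Neumann's trace inequality for symmetric matrices: for any n×n real symmetric matrices X and Y, Tr(XY) ≤ Σ_{i=1}^n λ_i(X)λ_i(Y), where eigenvalues are ordered non-increasingly. -/
open Matrix

/-- Eigenvalues of a real symmetric matrix sorted in non-increasing order. -/
noncomputable def eigDesc {n : ℕ} {A : Matrix (Fin n) (Fin n) ℝ} (hA : A.IsHermitian) :
    Fin n → ℝ :=
  fun i => hA.eigenvalues (Tuple.sort hA.eigenvalues (Fin.rev i))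

open Finset in
/-- one-dimensional rearrangement step -/
private lemma stepA (n m : ℕ) (hmn : m ≤ n) (b c : ℕ → ℝ)
    (hb : ∀ i j, i ≤ j → j < n → b j ≤ b i)
    (hc0 : ∀ j, j < n → 0 ≤ c j) (hc1 : ∀ j, j < n → c j ≤ 1)
    (hsum : ∑ j ∈ range n, c j = m) :
    ∑ j ∈ range n, c j * b j ≤ ∑ j ∈ range m, b j := by
  rcases eq_or_lt_of_le hmn with heq | hm
  · have h1 : ∑ j ∈ range n, (1 - c j) = 0 := by
      rw [Finset.sum_sub_distrib, hsum, heq]; simp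
    have h2 : ∀ j ∈ range n, c j = 1 := by
      intro j hj
      have := (Finset.sum_eq_zero_iff_of_nonneg (by
        intro i hi; simp only [mem_range] at hi
        linarith [hc1 i hi])).mp h1 j hj
      linarith [this]
    rw [heq]
    refine le_of_eq (Finset.sum_congr rfl fun j hj => ?_)
    rw [h2 j hj, one_mul]
  · have key : ∑ j ∈ range n, c j * b j ≤
        ∑ j ∈ range m, (b j + (c j - 1) * b m) + ∑ j ∈ Ico m n, c j * b m := by
      rw [show range n = range m ∪ Ico m n by
        rw [Finset.range_eq_Ico, Finset.range_eq_Ico]; exact (Finset.Ico_union_Ico_eq_Ico (Nat.zero_le m) hmn).symm,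
        Finset.sum_union (by rw [Finset.range_eq_Ico]; exact Finset.Ico_disjoint_Ico_consecutive 0 m n)]
      gcongr with j hj j hj
      · simp only [mem_range] at hj
        have h1 : c j * b j = b j + (c j - 1) * b j := by ring
        rw [h1]
        have := hb j m (le_of_lt hj) hm
        nlinarith [hc1 j (lt_trans hj hm)]
      · exact hc0 j (Finset.mem_Ico.mp hj).2
      · exact hb m j (Finset.mem_Ico.mp hj).1 (Finset.mem_Ico.mp hj).2
    have h3 : ∑ j ∈ range m, (b j + (c j - 1) * b m) + ∑ j ∈ Ico m n, c j * b m
        = ∑ j ∈ range m, b j + (∑ j ∈ range n, c j - m) * b m := by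
      rw [Finset.sum_add_distrib]
      rw [show range n = range m ∪ Ico m n by
        rw [Finset.range_eq_Ico, Finset.range_eq_Ico]; exact (Finset.Ico_union_Ico_eq_Ico (Nat.zero_le m) hmn).symm,
        Finset.sum_union (by rw [Finset.range_eq_Ico]; exact Finset.Ico_disjoint_Ico_consecutive 0 m n)]
      simp [Finset.sum_mul, Finset.mul_sum, sub_mul, Finset.sum_sub_distrib, mul_comm]
      rw [← Finset.mul_sum, ← Finset.mul_sum, Finset.sum_sub_distrib, Finset.sum_const,
        Finset.card_range, nsmul_eq_mul, mul_one]
      ring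
    rw [h3, hsum] at key
    simpa using key

open Finset in
/-- doubly stochastic rearrangement bound -/
private lemma coreDS (n : ℕ) (a b : ℕ → ℝ) (d : ℕ → ℕ → ℝ)
    (ha : ∀ i j, i ≤ j → j < n → a j ≤ a i)
    (hb : ∀ i j, i ≤ j → j < n → b j ≤ b i)
    (hd0 : ∀ i j, i < n → j < n → 0 ≤ d i j)
    (hrow : ∀ i, i < n → ∑ j ∈ range n, d i j = 1)
    (hcol : ∀ j, j < n → ∑ i ∈ range n, d i j = 1) :
    ∑ i ∈ range n, ∑ j ∈ range n, d i j * a i * b j ≤ ∑ i ∈ range n, a i * b i := by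
  rcases Nat.eq_zero_or_pos n with rfl | hn
  · simp
  set T : ℕ → ℝ := fun k => ∑ j ∈ range n, (∑ i ∈ range k, d i j) * b j with hT
  set B : ℕ → ℝ := fun k => ∑ j ∈ range k, b j with hB
  have hg : ∀ K, ∑ i ∈ range K, (∑ j ∈ range n, d i j * b j) = T K := by
    intro K
    rw [Finset.sum_comm, hT]
    exact Finset.sum_congr rfl fun j _ => by rw [Finset.sum_mul]
  have hTn : T n = B n := by
    rw [hT, hB]
    refine Finset.sum_congr rfl fun j hj => ?_
    rw [hcol j (Finset.mem_range.mp hj), one_mul]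
  have hTB : ∀ k, k ≤ n → T k ≤ B k := by
    intro k hk
    refine stepA n k hk b (fun j => ∑ i ∈ range k, d i j) hb ?_ ?_ ?_
    · intro j hj
      exact Finset.sum_nonneg fun i hi => hd0 i j (lt_of_lt_of_le (Finset.mem_range.mp hi) hk) hj
    · intro j hj
      calc ∑ i ∈ range k, d i j ≤ ∑ i ∈ range n, d i j := by
            refine Finset.sum_le_sum_of_subset_of_nonneg (Finset.range_subset_range.mpr hk) ?_
            intro i hi _
            exact hd0 i j (Finset.mem_range.mp hi) hj
        _ = 1 := hcol j hj
    · rw [Finset.sum_comm]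
      rw [show ((k : ℝ)) = ∑ i ∈ range k, (1:ℝ) by simp]
      exact Finset.sum_congr rfl fun i hi =>
        hrow i (lt_of_lt_of_le (Finset.mem_range.mp hi) hk)
  have lhs_eq : ∑ i ∈ range n, ∑ j ∈ range n, d i j * a i * b j
      = a (n-1) * T n - ∑ i ∈ range (n-1), (a (i+1) - a i) * T (i+1) := by
    have h1 : ∀ i, ∑ j ∈ range n, d i j * a i * b j = a i * (∑ j ∈ range n, d i j * b j) := by
      intro i; rw [Finset.mul_sum]; exact Finset.sum_congr rfl fun j _ => by ring
    simp_rw [h1]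
    have := Finset.sum_range_by_parts a (fun i => ∑ j ∈ range n, d i j * b j) n
    simp only [smul_eq_mul] at this
    rw [this, hg n]
    congr 1
    exact Finset.sum_congr rfl fun i _ => by rw [hg (i+1)]
  have rhs_eq : ∑ i ∈ range n, a i * b i
      = a (n-1) * B n - ∑ i ∈ range (n-1), (a (i+1) - a i) * B (i+1) := by
    have := Finset.sum_range_by_parts a b n
    simp only [smul_eq_mul] at this
    rw [this]
  rw [lhs_eq, rhs_eq, hTn]
  have : ∑ i ∈ range (n-1), (a (i+1) - a i) * B (i+1)
      ≤ ∑ i ∈ range (n-1), (a (i+1) - a i) * T (i+1) := by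
    refine Finset.sum_le_sum fun i hi => ?_
    have hi' : i + 1 < n := by
      have := Finset.mem_range.mp hi; omega
    have hanti : a (i+1) - a i ≤ 0 := by
      have := ha i (i+1) (Nat.le_succ i) hi'; linarith
    exact mul_le_mul_of_nonpos_left (hTB (i+1) (le_of_lt hi')) hanti
  linarith

private lemma traceEntry {n : ℕ} (a b : Fin n → ℝ) (W : Matrix (Fin n) (Fin n) ℝ) :
    (Matrix.diagonal a * W * Matrix.diagonal b * star W).trace
      = ∑ i, ∑ j, W i j ^ 2 * a i * b j := by
  have e1 : Matrix.diagonal a * W * Matrix.diagonal b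
      = Matrix.of (fun i j => a i * W i j * b j) := by
    ext i j
    rw [Matrix.mul_diagonal, Matrix.diagonal_mul, Matrix.of_apply]
  rw [e1]
  simp only [Matrix.trace, Matrix.diag, Matrix.mul_apply, Matrix.star_apply, star_trivial,
    Matrix.of_apply]
  exact Finset.sum_congr rfl fun i _ => Finset.sum_congr rfl fun j _ => by ring

/-- Von Neumann's trace inequality for real symmetric matrices:
`Tr(XY) ≤ ∑ i, λ_i(X) λ_i(Y)` with eigenvalues ordered non-increasingly. -/
theorem vonNeumann_trace_inequality {n : ℕ} {X Y : Matrix (Fin n) (Fin n) ℝ}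
    (hX : X.IsHermitian) (hY : Y.IsHermitian) :
    (X * Y).trace ≤ ∑ i, eigDesc hX i * eigDesc hY i := by
  classical
  set U : Matrix (Fin n) (Fin n) ℝ := (hX.eigenvectorUnitary : Matrix (Fin n) (Fin n) ℝ) with hUdef
  set V : Matrix (Fin n) (Fin n) ℝ := (hY.eigenvectorUnitary : Matrix (Fin n) (Fin n) ℝ) with hVdef
  set W : Matrix (Fin n) (Fin n) ℝ := star U * V with hWdef
  have hU1 : U * star U = 1 := Matrix.mem_unitaryGroup_iff.mp hX.eigenvectorUnitary.2
  have hU2 : star U * U = 1 := Matrix.mem_unitaryGroup_iff'.mp hX.eigenvectorUnitary.2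
  have hV1 : V * star V = 1 := Matrix.mem_unitaryGroup_iff.mp hY.eigenvectorUnitary.2
  have hV2 : star V * V = 1 := Matrix.mem_unitaryGroup_iff'.mp hY.eigenvectorUnitary.2
  have hXd : X = U * Matrix.diagonal hX.eigenvalues * star U := by
    simpa using hX.spectral_theorem
  have hYd : Y = V * Matrix.diagonal hY.eigenvalues * star V := by
    simpa using hY.spectral_theorem
  have hsW : star W = star V * U := by rw [hWdef, StarMul.star_mul, star_star]
  have h1 : X * Y = U * (Matrix.diagonal hX.eigenvalues * W * Matrix.diagonal hY.eigenvalues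
      * star W) * star U := by
    rw [hsW, hWdef]
    nth_rewrite 1 [hXd, hYd]
    have : U * (Matrix.diagonal hX.eigenvalues * (star U * V) * Matrix.diagonal hY.eigenvalues
        * (star V * U)) * star U
        = (U * Matrix.diagonal hX.eigenvalues * star U
            * (V * Matrix.diagonal hY.eigenvalues * star V)) * (U * star U) := by
      simp only [Matrix.mul_assoc]
    rw [this, hU1, mul_one]
  have htr : (X * Y).trace = ∑ i, ∑ j, W i j ^ 2 * hX.eigenvalues i * hY.eigenvalues j := by
    rw [h1, Matrix.trace_mul_comm, ← Matrix.mul_assoc, hU2, Matrix.one_mul]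
    exact traceEntry _ _ _
  have hWW1 : W * star W = 1 := by
    rw [hsW, hWdef, Matrix.mul_assoc, ← Matrix.mul_assoc V, hV1, Matrix.one_mul, hU2]
  have hWW2 : star W * W = 1 := by
    rw [hsW, hWdef, Matrix.mul_assoc, ← Matrix.mul_assoc U, hU1, Matrix.one_mul, hV2]
  have hrow : ∀ i, ∑ j, W i j ^ 2 = 1 := by
    intro i
    have := congrArg (fun M => M i i) hWW1
    simp only [Matrix.mul_apply, Matrix.star_apply, star_trivial, Matrix.one_apply_eq] at this
    rw [← this]
    exact Finset.sum_congr rfl fun j _ => by ring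
  have hcol : ∀ j, ∑ i, W i j ^ 2 = 1 := by
    intro j
    have := congrArg (fun M => M j j) hWW2
    simp only [Matrix.mul_apply, Matrix.star_apply, star_trivial, Matrix.one_apply_eq] at this
    rw [← this]
    exact Finset.sum_congr rfl fun i _ => by ring
  -- sorting permutations
  set eX : Equiv.Perm (Fin n) := Fin.revPerm.trans (Tuple.sort hX.eigenvalues) with heX
  set eY : Equiv.Perm (Fin n) := Fin.revPerm.trans (Tuple.sort hY.eigenvalues) with heY
  have heXval : ∀ i, eigDesc hX i = hX.eigenvalues (eX i) := fun i => rfl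
  have heYval : ∀ i, eigDesc hY i = hY.eigenvalues (eY i) := fun i => rfl
  -- natural-number versions
  set A : ℕ → ℝ := fun k => if h : k < n then hX.eigenvalues (eX ⟨k, h⟩) else 0 with hAdef
  set Bf : ℕ → ℝ := fun k => if h : k < n then hY.eigenvalues (eY ⟨k, h⟩) else 0 with hBdef
  set D : ℕ → ℕ → ℝ :=
    fun k l => if h : k < n ∧ l < n then W (eX ⟨k, h.1⟩) (eY ⟨l, h.2⟩) ^ 2 else 0 with hDdef
  have hAanti : ∀ i j, i ≤ j → j < n → A j ≤ A i := by
    intro i j hij hj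
    have hi : i < n := lt_of_le_of_lt hij hj
    simp only [hAdef, dif_pos hi, dif_pos hj]
    exact Tuple.monotone_sort hX.eigenvalues
      (show Fin.rev ⟨j, hj⟩ ≤ Fin.rev ⟨i, hi⟩ from Fin.rev_le_rev.mpr (Fin.mk_le_mk.mpr hij))
  have hBanti : ∀ i j, i ≤ j → j < n → Bf j ≤ Bf i := by
    intro i j hij hj
    have hi : i < n := lt_of_le_of_lt hij hj
    simp only [hBdef, dif_pos hi, dif_pos hj]
    exact Tuple.monotone_sort hY.eigenvalues
      (show Fin.rev ⟨j, hj⟩ ≤ Fin.rev ⟨i, hi⟩ from Fin.rev_le_rev.mpr (Fin.mk_le_mk.mpr hij))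
  have hD0 : ∀ i j, i < n → j < n → 0 ≤ D i j := by
    intro i j hi hj
    simp only [hDdef, dif_pos (And.intro hi hj)]
    positivity
  have hDrow : ∀ i, i < n → ∑ j ∈ Finset.range n, D i j = 1 := by
    intro i hi
    rw [← Fin.sum_univ_eq_sum_range (fun l => D i l) n]
    have : ∀ l : Fin n, D i (l : ℕ) = W (eX ⟨i, hi⟩) (eY l) ^ 2 := by
      intro l
      simp only [hDdef, dif_pos (And.intro hi l.isLt), Fin.eta]
    rw [Finset.sum_congr rfl fun l _ => this l]
    rw [Equiv.sum_comp eY (fun m => W (eX ⟨i, hi⟩) m ^ 2)]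
    exact hrow _
  have hDcol : ∀ j, j < n → ∑ i ∈ Finset.range n, D i j = 1 := by
    intro j hj
    rw [← Fin.sum_univ_eq_sum_range (fun k => D k j) n]
    have : ∀ k : Fin n, D (k : ℕ) j = W (eX k) (eY ⟨j, hj⟩) ^ 2 := by
      intro k
      simp only [hDdef, dif_pos (And.intro k.isLt hj), Fin.eta]
    rw [Finset.sum_congr rfl fun k _ => this k]
    rw [Equiv.sum_comp eX (fun m => W m (eY ⟨j, hj⟩) ^ 2)]
    exact hcol _
  have htr2 : (X * Y).trace = ∑ i ∈ Finset.range n, ∑ j ∈ Finset.range n, D i j * A i * Bf j := by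
    rw [htr]
    rw [← Equiv.sum_comp eX
      (fun i => ∑ j, W i j ^ 2 * hX.eigenvalues i * hY.eigenvalues j)]
    rw [show (∑ i, ∑ j, W (eX i) j ^ 2 * hX.eigenvalues (eX i) * hY.eigenvalues j)
        = ∑ i, ∑ j, W (eX i) (eY j) ^ 2 * hX.eigenvalues (eX i) * hY.eigenvalues (eY j) from
      Finset.sum_congr rfl fun i _ =>
        (Equiv.sum_comp eY fun j => W (eX i) j ^ 2 * hX.eigenvalues (eX i)
          * hY.eigenvalues j).symm]
    rw [← Fin.sum_univ_eq_sum_range (fun k => ∑ l ∈ Finset.range n, D k l * A k * Bf l) n]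
    refine Finset.sum_congr rfl fun i _ => ?_
    rw [← Fin.sum_univ_eq_sum_range (fun l => D (i : ℕ) l * A (i : ℕ) * Bf l) n]
    refine Finset.sum_congr rfl fun j _ => ?_
    simp only [hDdef, hAdef, hBdef, dif_pos (And.intro i.isLt j.isLt), dif_pos i.isLt,
      dif_pos j.isLt, Fin.eta]
  have hgoal : ∑ i, eigDesc hX i * eigDesc hY i = ∑ i ∈ Finset.range n, A i * Bf i := by
    rw [← Fin.sum_univ_eq_sum_range (fun k => A k * Bf k) n]
    refine Finset.sum_congr rfl fun i _ => ?_
    simp only [hAdef, hBdef, dif_pos i.isLt, Fin.eta, heXval, heYval]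
  rw [htr2, hgoal]
  exact coreDS n A Bf D hAanti hBanti hD0 hDrow hDcol
end

section
/- If X* is an optimal solution of rank r* to the problem of minimizing a convex differentiable function f over the spectrahedron S_n, with eigen-decomposition X* = Σ_{i=1}^{r*} λ_i v_i v_i^T, then each eigenvector v_i (i ≤ r*) is an eigenvector of ∇f(X*) corresponding to its smallest eigenvalue λ_n(∇f(X*)). -/
open Matrix


lemma trace_mul_vecMulVec {n : ℕ} (A : Matrix (Fin n) (Fin n) ℝ) (a b : Fin n → ℝ) :
    (A * vecMulVec a b).trace = b ⬝ᵥ (A *ᵥ a) := by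
  simp only [trace, diag_apply, mul_apply, vecMulVec_apply, dotProduct, mulVec, Finset.mul_sum]
  refine Finset.sum_congr rfl fun i _ => Finset.sum_congr rfl fun j _ => by ring

lemma trace_vecMulVec' {n : ℕ} (a b : Fin n → ℝ) : (vecMulVec a b).trace = a ⬝ᵥ b := by
  simp [trace, vecMulVec_apply, dotProduct]

lemma posSemidef_vecMulVec' {n : ℕ} (w : Fin n → ℝ) : (vecMulVec w w).PosSemidef := by
  have h := posSemidef_conjTranspose_mul_self (Matrix.replicateRow Unit w)
  rw [conjTranspose_replicateRow, star_trivial] at h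
  convert h using 1
  ext i j
  simp [vecMulVec_apply, mul_apply]

lemma psd_smul {n : ℕ} {A : Matrix (Fin n) (Fin n) ℝ} (hA : A.PosSemidef) {c : ℝ}
    (hc : 0 ≤ c) : (c • A).PosSemidef :=
  Matrix.PosSemidef.of_dotProduct_mulVec_nonneg (by unfold Matrix.IsHermitian; rw [conjTranspose_smul, hA.1, star_trivial])
   (fun (x : Fin n → ℝ) => by rw [smul_mulVec, dotProduct_smul, smul_eq_mul]; exact mul_nonneg hc (hA.dotProduct_mulVec_nonneg x))

lemma nonneg_of_hasDerivAt_min {g : ℝ → ℝ} {d : ℝ} (hd : HasDerivAt g d 0)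
    (h : ∀ t ∈ Set.Ioo (0:ℝ) 1, g 0 ≤ g t) : 0 ≤ d := by
  have h1 : Filter.Tendsto (slope g 0) (nhdsWithin 0 (Set.Ioi 0)) (nhds d) :=
    (hasDerivAt_iff_tendsto_slope.mp hd).mono_left
      (nhdsWithin_mono _ (fun x hx => ne_of_gt hx))
  refine ge_of_tendsto h1 ?_
  filter_upwards [Ioo_mem_nhdsGT_of_mem (by norm_num : (0:ℝ) ∈ Set.Ico 0 1)] with t ht
  rw [slope_def_field]
  have := h t ht
  have h0 : (0:ℝ) < t - 0 := by simpa using ht.1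
  exact div_nonneg (by linarith) h0.le

lemma shift_psd {n : ℕ} {G : Matrix (Fin n) (Fin n) ℝ} (hG : G.IsHermitian) {c : ℝ}
    (hc : ∀ j, c ≤ hG.eigenvalues j) : (G - c • (1 : Matrix (Fin n) (Fin n) ℝ)).PosSemidef := by
  have hU : (hG.eigenvectorUnitary : Matrix (Fin n) (Fin n) ℝ) *
      (star hG.eigenvectorUnitary : Matrix (Fin n) (Fin n) ℝ) = 1 :=
    Matrix.mem_unitaryGroup_iff.mp hG.eigenvectorUnitary.2
  have key : G - c • (1 : Matrix (Fin n) (Fin n) ℝ) =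
      (hG.eigenvectorUnitary : Matrix (Fin n) (Fin n) ℝ) *
        (diagonal (fun j => hG.eigenvalues j - c)) *
        (star hG.eigenvectorUnitary : Matrix (Fin n) (Fin n) ℝ) := by
    have hd : diagonal (fun j => hG.eigenvalues j - c) =
        diagonal (RCLike.ofReal ∘ hG.eigenvalues) - c • (1 : Matrix (Fin n) (Fin n) ℝ) := by
      ext i j
      by_cases h : i = j <;> simp [h, Matrix.diagonal_apply, Matrix.one_apply]
    rw [hd, Matrix.mul_sub, Matrix.sub_mul]
    nth_rewrite 1 [hG.spectral_theorem]
    simp only [Unitary.conjStarAlgAut_apply, Unitary.coe_star]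
    congr 1
    rw [Matrix.mul_smul, Matrix.smul_mul, mul_one, hU]
  rw [key]
  exact (posSemidef_diagonal_iff.mpr (fun j => sub_nonneg.mpr (hc j))).mul_mul_conjTranspose_same _

/-- If `X*` is an optimal solution of rank `r*` to minimizing a convex
differentiable `f` over the spectrahedron, with eigendecomposition
`X* = ∑ μ_i v_i v_iᵀ` (`μ_i > 0`, `v_i` orthonormal), then each `v_i` is an eigenvector
of the (symmetric) gradient `G = ∇f(X*)` corresponding to its smallest eigenvalue. -/
theorem optimal_eigvecs_are_bottom_eigvecs_of_grad {n r : ℕ}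
    (f : Matrix (Fin n) (Fin n) ℝ → ℝ)
    (hf : ConvexOn ℝ Set.univ f)
    {Xs G : Matrix (Fin n) (Fin n) ℝ}
    (hXs : Xs.PosSemidef) (hXstr : Xs.trace = 1)
    (hmin : ∀ Y : Matrix (Fin n) (Fin n) ℝ, Y.PosSemidef → Y.trace = 1 → f Xs ≤ f Y)
    (hG : G.IsHermitian)
    (hgrad : ∀ H : Matrix (Fin n) (Fin n) ℝ,
      HasDerivAt (fun t : ℝ => f (Xs + t • H)) ((G * H).trace) 0)
    (hrank : Xs.rank = r)
    (μ : Fin r → ℝ) (v : Fin r → Fin n → ℝ)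
    (hμ : ∀ i, 0 < μ i)
    (hortho : ∀ i j, v i ⬝ᵥ v j = if i = j then (1 : ℝ) else 0)
    (hdecomp : Xs = ∑ i, μ i • Matrix.vecMulVec (v i) (v i)) :
    ∀ i, G.mulVec (v i) = (⨅ j, hG.eigenvalues j) • v i := by
  intro i₀
  -- n is positive
  have hn : Nonempty (Fin n) := by
    rcases Nat.eq_zero_or_pos n with h | h
    · exfalso
      subst h
      have := hortho i₀ i₀
      simp [dotProduct] at this
    · exact ⟨⟨0, h⟩⟩
  set c : ℝ := ⨅ j, hG.eigenvalues j with hc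
  have hcle : ∀ j, c ≤ hG.eigenvalues j := fun j => ciInf_le (Finite.bddBelow_range _) j
  -- the infimum is attained
  obtain ⟨j₀, hj₀⟩ := Finite.exists_min hG.eigenvalues
  have hcj₀ : c = hG.eigenvalues j₀ := le_antisymm (hcle j₀) (le_ciInf hj₀)
  -- first-order optimality
  have key : ∀ Y : Matrix (Fin n) (Fin n) ℝ, Y.PosSemidef → Y.trace = 1 →
      (G * Xs).trace ≤ (G * Y).trace := by
    intro Y hY hYtr
    have hder := hgrad (Y - Xs)
    have hd : 0 ≤ (G * (Y - Xs)).trace := by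
      refine nonneg_of_hasDerivAt_min hder ?_
      intro t ht
      simp only [zero_smul, add_zero]
      have hfeas : Xs + t • (Y - Xs) = (1 - t) • Xs + t • Y := by
        rw [smul_sub]; module
      rw [hfeas]
      refine hmin _ ((psd_smul hXs (by linarith [ht.2])).add (psd_smul hY ht.1.le)) ?_
      rw [trace_add, trace_smul, trace_smul, hXstr, hYtr]
      simp
    have heq : (G * (Y - Xs)).trace = (G * Y).trace - (G * Xs).trace := by
      rw [Matrix.mul_sub, trace_sub]
    linarith
  -- G xᵀ x ≥ c for everything relevant
  have hMpsd := shift_psd hG hcle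
  have hMv : ∀ x : Fin n → ℝ,
      (G - c • (1 : Matrix (Fin n) (Fin n) ℝ)) *ᵥ x = G *ᵥ x - c • x := by
    intro x
    rw [sub_mulVec, smul_mulVec, one_mulVec]
  have hdot : ∀ x : Fin n → ℝ, star x ⬝ᵥ (G - c • (1 : Matrix (Fin n) (Fin n) ℝ)) *ᵥ x
      = x ⬝ᵥ G *ᵥ x - c * (x ⬝ᵥ x) := by
    intro x
    rw [hMv, star_trivial, dotProduct_sub, dotProduct_smul, smul_eq_mul]
  have hray : ∀ i : Fin r, c ≤ v i ⬝ᵥ G *ᵥ v i := by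
    intro i
    have h0 := hMpsd.dotProduct_mulVec_nonneg (v i)
    rw [hdot, hortho i i] at h0
    simp at h0
    linarith
  -- ∑ μ = 1
  have hsum : ∑ i, μ i = 1 := by
    have := congrArg Matrix.trace hdecomp
    rw [hXstr, trace_sum] at this
    simp only [trace_smul, trace_vecMulVec', hortho, if_pos rfl, smul_eq_mul, mul_one, if_true] at this
    exact this.symm
  -- trace of G * Xs
  have hGXs : (G * Xs).trace = ∑ i, μ i * (v i ⬝ᵥ G *ᵥ v i) := by
    rw [hdecomp, Matrix.mul_sum, trace_sum]
    refine Finset.sum_congr rfl fun i _ => ?_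
    rw [Matrix.mul_smul, trace_smul, trace_mul_vecMulVec, smul_eq_mul]
  -- trace of G * Xs ≤ c using Y = w wᵀ, w the bottom eigenvector
  set w : Fin n → ℝ := ⇑(hG.eigenvectorBasis j₀) with hw
  have hww : w ⬝ᵥ w = 1 := by
    have h1 : ‖hG.eigenvectorBasis j₀‖ = 1 := hG.eigenvectorBasis.orthonormal.1 j₀
    have h2 : (inner ℝ (hG.eigenvectorBasis j₀) (hG.eigenvectorBasis j₀) : ℝ) = 1 := by
      rw [real_inner_self_eq_norm_sq, h1]; norm_num
    rw [← h2]
    rw [EuclideanSpace.inner_eq_star_dotProduct, star_trivial]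
  have hGw : w ⬝ᵥ G *ᵥ w = c := by
    rw [hw, hG.mulVec_eigenvectorBasis, dotProduct_smul, smul_eq_mul, ← hw, hww, hcj₀]
    ring
  have hkey : (G * Xs).trace ≤ c := by
    have := key (vecMulVec w w) (posSemidef_vecMulVec' w)
      (by rw [trace_vecMulVec', hww])
    rw [trace_mul_vecMulVec, hGw] at this
    exact this
  -- each term equals c
  have hterm : ∀ i : Fin r, v i ⬝ᵥ G *ᵥ v i = c := by
    have hnonneg : ∀ i ∈ Finset.univ, 0 ≤ μ i * (v i ⬝ᵥ G *ᵥ v i - c) :=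
      fun i _ => mul_nonneg (hμ i).le (sub_nonneg.mpr (hray i))
    have hsum0 : ∑ i, μ i * (v i ⬝ᵥ G *ᵥ v i - c) = (G * Xs).trace - c := by
      simp_rw [mul_sub]
      rw [Finset.sum_sub_distrib, ← Finset.sum_mul, hsum, one_mul, ← hGXs]
    have hz : ∑ i, μ i * (v i ⬝ᵥ G *ᵥ v i - c) = 0 :=
      le_antisymm (by rw [hsum0]; linarith) (Finset.sum_nonneg hnonneg)
    intro i
    have := (Finset.sum_eq_zero_iff_of_nonneg hnonneg).mp hz i (Finset.mem_univ i)
    rcases mul_eq_zero.mp this with h | h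
    · exact absurd h (hμ i).ne'
    · linarith [sub_eq_zero.mp h]
  -- conclude
  have h0 : star (v i₀) ⬝ᵥ (G - c • (1 : Matrix (Fin n) (Fin n) ℝ)) *ᵥ v i₀ = 0 := by
    rw [hdot, hterm i₀, hortho i₀ i₀]
    simp
  have h1 := (hMpsd.dotProduct_mulVec_zero_iff (v i₀)).mp h0
  rw [hMv] at h1
  exact sub_eq_zero.mp h1
end

section
/- If a rank-r* optimal solution X* to min_{X ∈ S_n} f(X) satisfies the first-order optimality condition, then ⟨X*, ∇f(X*)⟩ = λ_n(∇f(X*)), i.e., the inner product of the optimal solution with its gradient equals the smallest eigenvalue of the gradient. -/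
open Matrix

/-- If a rank-`r*` optimal solution `X*` of a convex differentiable `f`
over the spectrahedron satisfies the first-order optimality condition, then
`⟨X*, ∇f(X*)⟩ = λ_n(∇f(X*))`, the smallest eigenvalue of the gradient. -/
theorem inner_opt_grad_eq_min_eigenvalue {n r : ℕ}
    (f : Matrix (Fin n) (Fin n) ℝ → ℝ)
    (hf : ConvexOn ℝ Set.univ f)
    {Xs G : Matrix (Fin n) (Fin n) ℝ}
    (hXs : Xs.PosSemidef) (hXstr : Xs.trace = 1)
    (hrank : Xs.rank = r)
    (hmin : ∀ Y : Matrix (Fin n) (Fin n) ℝ, Y.PosSemidef → Y.trace = 1 → f Xs ≤ f Y)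
    (hG : G.IsHermitian)
    (hgrad : ∀ H : Matrix (Fin n) (Fin n) ℝ,
      HasDerivAt (fun t : ℝ => f (Xs + t • H)) ((G * H).trace) 0)
    (hfoc : ∀ X : Matrix (Fin n) (Fin n) ℝ, X.PosSemidef → X.trace = 1 →
      0 ≤ (G * (X - Xs)).trace) :
    (Xs * G).trace = ⨅ j, hG.eigenvalues j := by
  classical
  -- n is positive, since trace Xs = 1
  have hn : Nonempty (Fin n) := by
    rcases Nat.eq_zero_or_pos n with h | h
    · exfalso
      subst h
      simp [Matrix.trace] at hXstr
    · exact ⟨⟨0, h⟩⟩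
  -- pick an index achieving the minimum eigenvalue
  obtain ⟨j0, -, hj0⟩ := Finset.exists_min_image Finset.univ hG.eigenvalues ⟨hn.some, Finset.mem_univ _⟩
  have hInf : (⨅ j, hG.eigenvalues j) = hG.eigenvalues j0 :=
    le_antisymm (ciInf_le (Set.Finite.bddBelow (Set.finite_range _)) j0)
      (le_ciInf fun j => hj0 j (Finset.mem_univ j))
  rw [hInf, Matrix.trace_mul_comm]
  set v : Fin n → ℝ := ⇑(hG.eigenvectorBasis j0) with hv
  have hGv : G *ᵥ v = hG.eigenvalues j0 • v := hG.mulVec_eigenvectorBasis j0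
  have hvv : v ⬝ᵥ v = 1 := by
    have h1 := hG.eigenvectorBasis.orthonormal.1 j0
    have h2 : (inner ℝ (hG.eigenvectorBasis j0) (hG.eigenvectorBasis j0) : ℝ) = 1 := by
      rw [real_inner_self_eq_norm_sq, h1]; norm_num
    rw [EuclideanSpace.inner_eq_star_dotProduct] at h2
    simpa [dotProduct, mul_comm] using h2
  -- the rank-one matrix Y = v vᵀ
  set Y : Matrix (Fin n) (Fin n) ℝ := Matrix.vecMulVec v v with hY
  have hYps : Y.PosSemidef := by
    refine Matrix.PosSemidef.of_dotProduct_mulVec_nonneg ?_ ?_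
    · ext i j
      simp [hY, Matrix.vecMulVec_apply, Matrix.conjTranspose_apply, mul_comm]
    · intro x
      have : (star x) ⬝ᵥ (Y *ᵥ x) = (v ⬝ᵥ x) * (v ⬝ᵥ x) := by
        simp only [hY, Matrix.vecMulVec_apply, dotProduct, Matrix.mulVec,
          Pi.star_apply, star_trivial, Finset.mul_sum, Finset.sum_mul]
        exact Finset.sum_congr rfl fun i _ => Finset.sum_congr rfl fun j _ => by ring
      rw [this]
      exact mul_self_nonneg _
  have hYtr : Y.trace = 1 := by
    simpa [hY, Matrix.trace, Matrix.diag, Matrix.vecMulVec_apply, dotProduct] using hvv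
  have hGY : (G * Y).trace = hG.eigenvalues j0 := by
    have : (G * Y).trace = (G *ᵥ v) ⬝ᵥ v := by
      simp only [Matrix.trace, Matrix.diag, Matrix.mul_apply, hY, Matrix.vecMulVec_apply,
        dotProduct, Matrix.mulVec, Finset.sum_mul]
      exact Finset.sum_congr rfl fun i _ => Finset.sum_congr rfl fun j _ => by ring
    rw [this, hGv]
    simp [smul_dotProduct, hvv]
  -- upper bound from first-order optimality
  have hub : (G * Xs).trace ≤ hG.eigenvalues j0 := by
    have h := hfoc Y hYps hYtr
    rw [Matrix.mul_sub, Matrix.trace_sub, hGY] at h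
    linarith
  -- lower bound: trace (G * Xs) ≥ λ_min
  have hlb : hG.eigenvalues j0 ≤ (G * Xs).trace := by
    set U : Matrix (Fin n) (Fin n) ℝ := (hG.eigenvectorUnitary : Matrix (Fin n) (Fin n) ℝ)
      with hU
    have hspec : G = U * Matrix.diagonal (RCLike.ofReal ∘ hG.eigenvalues) * Uᴴ := by
      rw [hU, ← Matrix.star_eq_conjTranspose]
      exact hG.spectral_theorem
    have hUU : U * Uᴴ = 1 := by
      rw [hU, ← Matrix.star_eq_conjTranspose]
      exact Matrix.mem_unitaryGroup_iff.mp hG.eigenvectorUnitary.2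
    set P : Matrix (Fin n) (Fin n) ℝ := Uᴴ * Xs * U with hP
    have hPps : P.PosSemidef := hXs.conjTranspose_mul_mul_same U
    have hPtr : P.trace = 1 := by
      rw [hP, Matrix.trace_mul_cycle, hUU, Matrix.one_mul, hXstr]
    have hdiag : ∀ i, 0 ≤ P i i := fun i => by
      have := hPps.dotProduct_mulVec_nonneg (Pi.single i 1)
      simpa [dotProduct, Matrix.mulVec, Pi.single_apply] using this
    have hGdecomp : (G * Xs).trace = ∑ i, hG.eigenvalues i * P i i := by
      conv_lhs => rw [hspec]
      rw [Matrix.mul_assoc (U * Matrix.diagonal (RCLike.ofReal ∘ hG.eigenvalues)) Uᴴ Xs,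
        Matrix.trace_mul_comm, ← Matrix.mul_assoc, Matrix.trace_mul_comm, ← hP]
      simp [Matrix.trace, Matrix.diag, Matrix.diagonal_mul, Function.comp,
        RCLike.ofReal_real_eq_id]
    rw [hGdecomp]
    calc hG.eigenvalues j0 = ∑ i, hG.eigenvalues j0 * P i i := by
          rw [← Finset.mul_sum]
          have h1 : ∑ i, P i i = 1 := hPtr
          rw [h1, mul_one]
      _ ≤ ∑ i, hG.eigenvalues i * P i i :=
          Finset.sum_le_sum fun i _ =>
            mul_le_mul_of_nonneg_right (hj0 i (Finset.mem_univ i)) (hdiag i)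
  linarith
end

section
/- Let Y be symmetric positive definite with ordered eigenvalues λ_1(Y) ≥ ... ≥ λ_n(Y), let Z_+ = Y / Tr(Y), and let X_+ = (1-ε) Y^r/a + (ε/(n-r))(I - V^r (V^r)^T) where Y^r is the top-rank-r part of Y, a = Σ_{i=1}^r λ_i(Y), and V^r the corresponding eigenvectors. If ε ∈ (0, 3/4], then for every j ≤ r, the j-th eigenvalue of log(Z_+) - log(X_+) is at most 2ε, and for every j > r it is at most log((n-r)λ_{r+1}(Y)/(ε Tr(Y))). -/
open Matrix

lemma trace_eq_sum_eig {n : ℕ} {A : Matrix (Fin n) (Fin n) ℝ} (hA : A.IsHermitian) :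
    A.trace = ∑ i, hA.eigenvalues i := by
  conv_lhs => rw [hA.spectral_theorem]
  rw [Unitary.conjStarAlgAut_apply]
  rw [Matrix.trace_mul_comm, ← mul_assoc]
  rw [(Matrix.mem_unitaryGroup_iff').mp (Matrix.IsHermitian.eigenvectorUnitary hA).2, one_mul,
    Matrix.trace_diagonal]
  simp

lemma exp_cubic {ε : ℝ} (hε : 0 ≤ ε) :
    (1:ℝ) + 2*ε + 2*ε^2 + (4/3)*ε^3 ≤ Real.exp (2*ε) := by
  have h := Real.sum_le_exp_of_nonneg (by positivity : (0:ℝ) ≤ 2*ε) 4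
  simp [Finset.sum_range_succ, Nat.factorial] at h
  nlinarith [h]

lemma neg_log_one_sub_le {ε : ℝ} (hε : 0 < ε) (hε' : ε ≤ 3/4) :
    -Real.log (1 - ε) ≤ 2 * ε := by
  have h1 := exp_cubic hε.le
  have e2 : ε^2 ≤ 9/16 := by nlinarith
  have e3 : ε^3 ≤ 27/64 := by nlinarith [e2]
  have key : 0 ≤ ε * (1 - 2/3*ε^2 - 4/3*ε^3) := mul_nonneg hε.le (by linarith)
  have hq : (1:ℝ) ≤ (1 - ε) * (1 + 2*ε + 2*ε^2 + 4/3*ε^3) := by nlinarith [key]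
  have h2 : (1:ℝ) ≤ (1 - ε) * Real.exp (2*ε) :=
    hq.trans (mul_le_mul_of_nonneg_left h1 (by linarith : (0:ℝ) ≤ 1 - ε))
  have hexp : Real.exp (-(2*ε)) ≤ 1 - ε := by
    have hmul : Real.exp (-(2*ε)) * Real.exp (2*ε) = 1 := by
      rw [← Real.exp_add]; simp
    nlinarith [mul_le_mul_of_nonneg_left h2 (Real.exp_pos (-(2*ε))).le,
      Real.exp_pos (-(2*ε))]
  have := (Real.le_log_iff_exp_le (by linarith : (0:ℝ) < 1 - ε)).mpr hexp
  linarith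

/-- Let `Y ≻ 0` with ordered eigenvalues `λ_1 ≥ ... ≥ λ_n`, and let
`Z₊ = Y / Tr Y`, `X₊` the `ε`-perturbed normalized rank-`r` truncation. The eigenvalues
of `log Z₊ - log X₊` in the common eigenbasis are `D j = log(λ_j/b) - log((1-ε)λ_j/a)`
for `j ≤ r` and `D j = log(λ_j/b) - log(ε/(n-r))` for `j > r` (with `b = Tr Y`,
`a = ∑_{i ≤ r} λ_i`). If `ε ∈ (0, 3/4]` then `D j ≤ 2ε` for `j ≤ r` and
`D j ≤ log((n-r) λ_{r+1} / (ε b))` for `j > r`. -/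
theorem lowRank_update_log_eig_bounds {n r : ℕ} (hr : 1 ≤ r) (hrn : r < n)
    {Y : Matrix (Fin n) (Fin n) ℝ} (hY : Y.PosDef)
    {ε : ℝ} (hε : 0 < ε) (hε' : ε ≤ 3 / 4)
    (a b : ℝ)
    (ha : a = ∑ i ∈ Finset.univ.filter (fun i : Fin n => (i : ℕ) < r), eigDesc hY.1 i)
    (hb : b = Y.trace)
    (D : Fin n → ℝ)
    (hD : ∀ j : Fin n, D j =
      if (j : ℕ) < r then
        Real.log (eigDesc hY.1 j / b) - Real.log ((1 - ε) * eigDesc hY.1 j / a)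
      else
        Real.log (eigDesc hY.1 j / b) - Real.log (ε / ((n : ℝ) - (r : ℝ)))) :
    (∀ j : Fin n, (j : ℕ) < r → D j ≤ 2 * ε) ∧
    (∀ j : Fin n, r ≤ (j : ℕ) →
      D j ≤ Real.log (((n : ℝ) - (r : ℝ)) * eigDesc hY.1 ⟨r, hrn⟩ / (ε * b))) := by
  have hevpos : ∀ i, 0 < hY.1.eigenvalues i := hY.eigenvalues_pos
  have hLpos : ∀ i, 0 < eigDesc hY.1 i := fun i => hevpos _
  have hb0 : 0 < b := by
    have hn0 : 0 < n := lt_of_le_of_lt (Nat.zero_le r) hrn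
    rw [hb, trace_eq_sum_eig hY.1]
    exact Finset.sum_pos (fun i _ => hevpos i) ⟨⟨0, hn0⟩, Finset.mem_univ _⟩
  have ha0 : 0 < a := by
    rw [ha]
    refine Finset.sum_pos (fun i _ => hLpos i) ?_
    have hn0 : 0 < n := lt_of_le_of_lt (Nat.zero_le r) hrn
    exact ⟨⟨0, hn0⟩, by simp; omega⟩
  have hab : a ≤ b := by
    rw [ha, hb, trace_eq_sum_eig hY.1]
    have hinj : Function.Injective
        (fun i : Fin n => Tuple.sort hY.1.eigenvalues (Fin.rev i)) :=
      (Tuple.sort hY.1.eigenvalues).injective.comp Fin.rev_injective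
    calc ∑ i ∈ Finset.univ.filter (fun i : Fin n => (i : ℕ) < r), eigDesc hY.1 i
        = ∑ j ∈ (Finset.univ.filter (fun i : Fin n => (i : ℕ) < r)).image
            (fun i => Tuple.sort hY.1.eigenvalues (Fin.rev i)), hY.1.eigenvalues j := by
          rw [Finset.sum_image (fun x _ y _ h => hinj h)]; rfl
      _ ≤ ∑ i, hY.1.eigenvalues i :=
          Finset.sum_le_sum_of_subset_of_nonneg (Finset.subset_univ _)
            (fun i _ _ => (hevpos i).le)
  have h1ε : (0:ℝ) < 1 - ε := by linarith
  have hnr : (0:ℝ) < (n:ℝ) - (r:ℝ) := by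
    have : (r:ℝ) < (n:ℝ) := by exact_mod_cast hrn
    linarith
  constructor
  · intro j hj
    rw [hD j, if_pos hj]
    have hL := hLpos j
    rw [Real.log_div (hL.ne') hb0.ne', Real.log_div (by positivity) ha0.ne',
      Real.log_mul h1ε.ne' hL.ne']
    have h2 := Real.log_le_log ha0 hab
    have h3 := neg_log_one_sub_le hε hε'
    linarith
  · intro j hj
    rw [hD j, if_neg (not_lt.mpr hj)]
    have hLj := hLpos j
    have hLr := hLpos ⟨r, hrn⟩
    have hle : eigDesc hY.1 j ≤ eigDesc hY.1 ⟨r, hrn⟩ := by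
      have hmono := Tuple.monotone_sort hY.1.eigenvalues
      have : Fin.rev j ≤ Fin.rev (⟨r, hrn⟩ : Fin n) := by
        rw [Fin.rev_le_rev]
        exact Fin.mk_le_of_le_val hj
      exact hmono this
    rw [Real.log_div hLj.ne' hb0.ne', Real.log_div hε.ne' hnr.ne',
      Real.log_div (mul_pos hnr hLr).ne' (mul_pos hε hb0).ne',
      Real.log_mul hnr.ne' hLr.ne', Real.log_mul hε.ne' hb0.ne']
    have := Real.log_le_log hLj hle
    linarith
end

section
/- Concavity-based trace-log bound: for symmetric matrices X ∈ S_n positive definite with unit trace and any symmetric matrix G, -log(Tr(exp(log X - ηG))) ≤ -Tr(X(log X - ηG)) + Tr(X log X) = η⟨X, G⟩, for any η > 0. -/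
open Matrix

lemma trace_unitary_conj_diag {n : ℕ} (U : Matrix.unitaryGroup (Fin n) ℝ) (d : Fin n → ℝ) :
    ((U : Matrix (Fin n) (Fin n) ℝ) * diagonal d * (U : Matrix (Fin n) (Fin n) ℝ)ᴴ).trace
      = ∑ i, d i := by
  rw [Matrix.trace_mul_cycle, ← Matrix.star_eq_conjTranspose,
    (Matrix.mem_unitaryGroup_iff').mp U.2, one_mul, Matrix.trace_diagonal]

lemma conj_diag_mul_conj_diag {n : ℕ} (U : Matrix.unitaryGroup (Fin n) ℝ) (a b : Fin n → ℝ) :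
    ((U : Matrix (Fin n) (Fin n) ℝ) * diagonal a * (U : Matrix (Fin n) (Fin n) ℝ)ᴴ) *
      ((U : Matrix (Fin n) (Fin n) ℝ) * diagonal b * (U : Matrix (Fin n) (Fin n) ℝ)ᴴ)
      = (U : Matrix (Fin n) (Fin n) ℝ) * diagonal (fun i => a i * b i) *
        (U : Matrix (Fin n) (Fin n) ℝ)ᴴ := by
  have hUU : (U : Matrix (Fin n) (Fin n) ℝ)ᴴ * (U : Matrix (Fin n) (Fin n) ℝ) = 1 := by
    rw [← Matrix.star_eq_conjTranspose]; exact (Matrix.mem_unitaryGroup_iff').mp U.2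
  calc ((U : Matrix (Fin n) (Fin n) ℝ) * diagonal a * (U : Matrix (Fin n) (Fin n) ℝ)ᴴ) *
      ((U : Matrix (Fin n) (Fin n) ℝ) * diagonal b * (U : Matrix (Fin n) (Fin n) ℝ)ᴴ)
      = (U : Matrix (Fin n) (Fin n) ℝ) * diagonal a *
        (((U : Matrix (Fin n) (Fin n) ℝ)ᴴ * (U : Matrix (Fin n) (Fin n) ℝ)) *
          (diagonal b * (U : Matrix (Fin n) (Fin n) ℝ)ᴴ)) := by
        simp only [Matrix.mul_assoc]
    _ = (U : Matrix (Fin n) (Fin n) ℝ) * diagonal (fun i => a i * b i) *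
        (U : Matrix (Fin n) (Fin n) ℝ)ᴴ := by
        rw [hUU, one_mul, ← Matrix.mul_assoc, Matrix.mul_assoc _ (diagonal a) (diagonal b),
          Matrix.diagonal_mul_diagonal]

lemma spectral_real {n : ℕ} {A : Matrix (Fin n) (Fin n) ℝ} (hA : A.IsHermitian) :
    A = (hA.eigenvectorUnitary : Matrix (Fin n) (Fin n) ℝ) * diagonal hA.eigenvalues *
      (hA.eigenvectorUnitary : Matrix (Fin n) (Fin n) ℝ)ᴴ := by
  conv_lhs => rw [hA.spectral_theorem]
  simp [Matrix.star_eq_conjTranspose, Function.comp]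

lemma trace_conj_mul_conj {n : ℕ} (U V : Matrix.unitaryGroup (Fin n) ℝ) (p ν : Fin n → ℝ) :
    (((U : Matrix (Fin n) (Fin n) ℝ) * diagonal p * (U : Matrix (Fin n) (Fin n) ℝ)ᴴ) *
      ((V : Matrix (Fin n) (Fin n) ℝ) * diagonal ν * (V : Matrix (Fin n) (Fin n) ℝ)ᴴ)).trace
      = ∑ i, ∑ j, p i * ν j * (((U : Matrix (Fin n) (Fin n) ℝ)ᴴ * (V : Matrix (Fin n) (Fin n) ℝ)) i j)^2 := by
  set U' := (U : Matrix (Fin n) (Fin n) ℝ) with hU'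
  set V' := (V : Matrix (Fin n) (Fin n) ℝ) with hV'
  set W := U'ᴴ * V' with hW
  have hUU : U' * U'ᴴ = 1 := by
    rw [← Matrix.star_eq_conjTranspose]; exact (Matrix.mem_unitaryGroup_iff).mp U.2
  have h1 : U' * (diagonal p * (W * diagonal ν * Wᴴ)) * U'ᴴ =
      (U' * diagonal p * U'ᴴ) * (V' * diagonal ν * V'ᴴ) := by
    simp only [hW, Matrix.conjTranspose_mul, Matrix.conjTranspose_conjTranspose,
      Matrix.mul_assoc]
    rw [hUU, Matrix.mul_one]
  rw [← h1, Matrix.trace_mul_cycle, ← Matrix.star_eq_conjTranspose,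
    (Matrix.mem_unitaryGroup_iff').mp U.2, one_mul]
  rw [Matrix.trace]
  congr 1; funext i
  rw [Matrix.diag, Matrix.diagonal_mul, Matrix.mul_apply, Finset.mul_sum]
  congr 1; funext j
  rw [Matrix.mul_diagonal, Matrix.conjTranspose_apply, star_trivial]
  ring


noncomputable def matLog {n : ℕ} {A : Matrix (Fin n) (Fin n) ℝ} (hA : A.IsHermitian) :
    Matrix (Fin n) (Fin n) ℝ :=
  (hA.eigenvectorUnitary : Matrix (Fin n) (Fin n) ℝ) *
    Matrix.diagonal (fun i => Real.log (hA.eigenvalues i)) *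
    (hA.eigenvectorUnitary : Matrix (Fin n) (Fin n) ℝ)ᴴ

noncomputable def matExp {n : ℕ} {A : Matrix (Fin n) (Fin n) ℝ} (hA : A.IsHermitian) :
    Matrix (Fin n) (Fin n) ℝ :=
  (hA.eigenvectorUnitary : Matrix (Fin n) (Fin n) ℝ) *
    Matrix.diagonal (fun i => Real.exp (hA.eigenvalues i)) *
    (hA.eigenvectorUnitary : Matrix (Fin n) (Fin n) ℝ)ᴴ

lemma matLog_isHermitian {n : ℕ} {A : Matrix (Fin n) (Fin n) ℝ} (hA : A.IsHermitian) :
    (matLog hA).IsHermitian := by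
  unfold matLog Matrix.IsHermitian
  simp [Matrix.conjTranspose_mul, Matrix.mul_assoc, Matrix.diagonal_conjTranspose]

lemma smul_isHermitian {n : ℕ} {G : Matrix (Fin n) (Fin n) ℝ} (hG : G.IsHermitian)
    (η : ℝ) : (η • G).IsHermitian := by
  unfold Matrix.IsHermitian at *
  rw [Matrix.conjTranspose_smul, hG, star_trivial]

/-- For `X ≻ 0` symmetric with `Tr X = 1`, symmetric `G` and `η > 0`:
`-log(Tr(exp(log X - ηG))) ≤ -Tr(X(log X - ηG)) + Tr(X log X) = η ⟨X, G⟩`. -/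
theorem neg_log_trace_exp_le {n : ℕ} {X G : Matrix (Fin n) (Fin n) ℝ}
    (hX : X.PosDef) (hXtr : X.trace = 1) (hG : G.IsHermitian) {η : ℝ} (hη : 0 < η) :
    -Real.log ((matExp ((matLog_isHermitian hX.1).sub (smul_isHermitian hG η))).trace)
        ≤ -(X * (matLog hX.1 - η • G)).trace + (X * matLog hX.1).trace ∧
      -(X * (matLog hX.1 - η • G)).trace + (X * matLog hX.1).trace
        = η * (X * G).trace := by
  have heq : -(X * (matLog hX.1 - η • G)).trace + (X * matLog hX.1).trace
      = η * (X * G).trace := by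
    rw [Matrix.mul_sub, Matrix.trace_sub, Matrix.mul_smul, Matrix.trace_smul, smul_eq_mul]
    ring
  refine ⟨?_, heq⟩
  set hM : (matLog hX.1 - η • G).IsHermitian :=
    (matLog_isHermitian hX.1).sub (smul_isHermitian hG η) with hMdef
  set p : Fin n → ℝ := hX.1.eigenvalues with hpdef
  set ν : Fin n → ℝ := hM.eigenvalues with hνdef
  set U := hX.1.eigenvectorUnitary with hUdef
  set V := hM.eigenvectorUnitary with hVdef
  set W := (U : Matrix (Fin n) (Fin n) ℝ)ᴴ * (V : Matrix (Fin n) (Fin n) ℝ) with hWdef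
  have hp : ∀ i, 0 < p i := fun i => hX.eigenvalues_pos i
  -- row and column sums of (W i j)^2
  have hUU : (U : Matrix (Fin n) (Fin n) ℝ)ᴴ * (U : Matrix (Fin n) (Fin n) ℝ) = 1 := by
    rw [← Matrix.star_eq_conjTranspose]; exact (Matrix.mem_unitaryGroup_iff').mp U.2
  have hUU' : (U : Matrix (Fin n) (Fin n) ℝ) * (U : Matrix (Fin n) (Fin n) ℝ)ᴴ = 1 := by
    rw [← Matrix.star_eq_conjTranspose]; exact (Matrix.mem_unitaryGroup_iff).mp U.2
  have hVV : (V : Matrix (Fin n) (Fin n) ℝ) * (V : Matrix (Fin n) (Fin n) ℝ)ᴴ = 1 := by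
    rw [← Matrix.star_eq_conjTranspose]; exact (Matrix.mem_unitaryGroup_iff).mp V.2
  have hVV' : (V : Matrix (Fin n) (Fin n) ℝ)ᴴ * (V : Matrix (Fin n) (Fin n) ℝ) = 1 := by
    rw [← Matrix.star_eq_conjTranspose]; exact (Matrix.mem_unitaryGroup_iff').mp V.2
  have hWW : W * Wᴴ = 1 := by
    have : W * Wᴴ = (U : Matrix (Fin n) (Fin n) ℝ)ᴴ *
        (((V : Matrix (Fin n) (Fin n) ℝ) * (V : Matrix (Fin n) (Fin n) ℝ)ᴴ) *
          (U : Matrix (Fin n) (Fin n) ℝ)) := by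
      simp only [hWdef, Matrix.conjTranspose_mul, Matrix.conjTranspose_conjTranspose,
        Matrix.mul_assoc]
    rw [this, hVV, one_mul, hUU]
  have hWW' : Wᴴ * W = 1 := by
    have : Wᴴ * W = (V : Matrix (Fin n) (Fin n) ℝ)ᴴ *
        (((U : Matrix (Fin n) (Fin n) ℝ) * (U : Matrix (Fin n) (Fin n) ℝ)ᴴ) *
          (V : Matrix (Fin n) (Fin n) ℝ)) := by
      simp only [hWdef, Matrix.conjTranspose_mul, Matrix.conjTranspose_conjTranspose,
        Matrix.mul_assoc]
    rw [this, hUU', one_mul, hVV']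
  have hrow : ∀ i, ∑ j, (W i j)^2 = 1 := by
    intro i
    have := congrArg (fun (M : Matrix (Fin n) (Fin n) ℝ) => M i i) hWW
    simpa [Matrix.mul_apply, Matrix.conjTranspose_apply, sq, Matrix.one_apply] using this
  have hcol : ∀ j, ∑ i, (W i j)^2 = 1 := by
    intro j
    have := congrArg (fun (M : Matrix (Fin n) (Fin n) ℝ) => M j j) hWW'
    simpa [Matrix.mul_apply, Matrix.conjTranspose_apply, sq, Matrix.one_apply] using this
  -- trace facts
  have hsump : ∑ i, p i = 1 := by
    rw [← trace_unitary_conj_diag U p, ← spectral_real hX.1, hXtr]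
  have hXspec := spectral_real hX.1
  have hMspec := spectral_real hM
  have hF1 : (matExp hM).trace = ∑ j, Real.exp (ν j) := by
    unfold matExp
    exact trace_unitary_conj_diag V (fun j => Real.exp (ν j))
  have hF4 : (X * (matLog hX.1 - η • G)).trace = ∑ i, ∑ j, p i * ν j * (W i j)^2 := by
    have e : X * (matLog hX.1 - η • G) =
        ((U : Matrix (Fin n) (Fin n) ℝ) * diagonal p * (U : Matrix (Fin n) (Fin n) ℝ)ᴴ) *
          ((V : Matrix (Fin n) (Fin n) ℝ) * diagonal ν * (V : Matrix (Fin n) (Fin n) ℝ)ᴴ) :=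
      congrArg₂ HMul.hMul hXspec hMspec
    rw [e]
    exact trace_conj_mul_conj U V p ν
  have hF5 : (X * matLog hX.1).trace = ∑ i, p i * Real.log (p i) := by
    have e : X * matLog hX.1 =
        ((U : Matrix (Fin n) (Fin n) ℝ) * diagonal p * (U : Matrix (Fin n) (Fin n) ℝ)ᴴ) *
          ((U : Matrix (Fin n) (Fin n) ℝ) * diagonal (fun i => Real.log (p i)) *
            (U : Matrix (Fin n) (Fin n) ℝ)ᴴ) :=
      congrArg₂ HMul.hMul hXspec rfl
    rw [e, conj_diag_mul_conj_diag U p (fun i => Real.log (p i))]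
    exact trace_unitary_conj_diag U _
  -- Jensen
  have key : Real.exp ((X * (matLog hX.1 - η • G)).trace - (X * matLog hX.1).trace)
      ≤ (matExp hM).trace := by
    rw [hF1, hF4, hF5]
    have hw0 : ∀ q ∈ (Finset.univ : Finset (Fin n × Fin n)),
        0 ≤ p q.1 * (W q.1 q.2)^2 := fun q _ => mul_nonneg (hp q.1).le (sq_nonneg _)
    have hw1 : ∑ q : Fin n × Fin n, p q.1 * (W q.1 q.2)^2 = 1 := by
      rw [Fintype.sum_prod_type]
      calc ∑ i, ∑ j, p i * (W i j)^2 = ∑ i, p i * ∑ j, (W i j)^2 := by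
            simp [Finset.mul_sum]
        _ = ∑ i, p i := by simp [hrow]
        _ = 1 := hsump
    have hJ := convexOn_exp.map_sum_le (p := fun q : Fin n × Fin n => ν q.2 - Real.log (p q.1))
      hw0 hw1 (fun _ _ => Set.mem_univ _)
    simp only [smul_eq_mul] at hJ
    have harg : ∑ q : Fin n × Fin n, p q.1 * (W q.1 q.2)^2 * (ν q.2 - Real.log (p q.1))
        = (∑ i, ∑ j, p i * ν j * (W i j)^2) - ∑ i, p i * Real.log (p i) := by
      rw [Fintype.sum_prod_type]
      rw [show (∑ i, ∑ j, p i * (W i j)^2 * (ν j - Real.log (p i)))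
          = (∑ i, ∑ j, p i * ν j * (W i j)^2) - ∑ i, ∑ j, p i * Real.log (p i) * (W i j)^2 by
        rw [← Finset.sum_sub_distrib]
        congr 1; funext i
        rw [← Finset.sum_sub_distrib]
        congr 1; funext j
        ring]
      congr 1
      apply Finset.sum_congr rfl
      intro i _
      rw [← Finset.mul_sum, hrow i, mul_one]
    have hrhs : ∑ q : Fin n × Fin n, p q.1 * (W q.1 q.2)^2 * Real.exp (ν q.2 - Real.log (p q.1))
        = ∑ j, Real.exp (ν j) := by
      rw [Fintype.sum_prod_type]
      rw [Finset.sum_comm]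
      apply Finset.sum_congr rfl
      intro j _
      have : ∀ i, p i * (W i j)^2 * Real.exp (ν j - Real.log (p i))
          = (W i j)^2 * Real.exp (ν j) := by
        intro i
        have hne : p i ≠ 0 := (hp i).ne'
        rw [Real.exp_sub, Real.exp_log (hp i)]
        field_simp
      simp only [this]
      rw [← Finset.sum_mul, hcol j, one_mul]
    rw [harg, hrhs] at hJ
    exact hJ
  have hpos : 0 < (matExp hM).trace := lt_of_lt_of_le (Real.exp_pos _) key
  have hlog := (Real.le_log_iff_exp_le hpos).mpr key
  linarith
end

section
/- Golden–Thompson bound on the normalization constant: for X symmetric positive definite with Tr(X)=1 and symmetric G with ‖G‖_2 ≤ G₀, it holds that log(Tr(exp(log X - ηG))) ≤ η G₀ for any η > 0. -/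
open Matrix

lemma conj_diag_entry {n : ℕ} (d : Fin n → ℝ) (P : Matrix (Fin n) (Fin n) ℝ) (k : Fin n) :
    (Pᴴ * Matrix.diagonal d * P) k k = ∑ j, d j * (P j k) ^ 2 := by
  simp only [Matrix.mul_apply, Matrix.conjTranspose_apply, star_trivial,
    Matrix.diagonal_apply, ite_mul, zero_mul, mul_ite, mul_zero,
    Finset.sum_ite_eq, Finset.sum_ite_eq', Finset.mem_univ, if_true, Finset.sum_mul]
  exact Finset.sum_congr rfl fun j _ => by ring

lemma col_sq_sum {n : ℕ} {P : Matrix (Fin n) (Fin n) ℝ} (hP : Pᴴ * P = 1) (k : Fin n) :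
    ∑ j, (P j k) ^ 2 = 1 := by
  have := congr_fun (congr_fun hP k) k
  simpa [Matrix.mul_apply, Matrix.conjTranspose_apply, Matrix.one_apply, sq] using this

lemma row_sq_sum {n : ℕ} {P : Matrix (Fin n) (Fin n) ℝ} (hP : P * Pᴴ = 1) (j : Fin n) :
    ∑ k, (P j k) ^ 2 = 1 := by
  have := congr_fun (congr_fun hP j) j
  simpa [Matrix.mul_apply, Matrix.conjTranspose_apply, Matrix.one_apply, sq] using this


/-- Golden–Thompson bound on the normalization constant: for `X ≻ 0`
symmetric with `Tr X = 1` and symmetric `G` with `‖G‖₂ ≤ G₀`,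
`log(Tr(exp(log X - ηG))) ≤ η G₀` for any `η > 0`. -/
theorem log_trace_exp_le {n : ℕ} {X G : Matrix (Fin n) (Fin n) ℝ}
    (hX : X.PosDef) (hXtr : X.trace = 1) (hG : G.IsHermitian)
    {G₀ : ℝ} (hGnorm : ∀ i, |hG.eigenvalues i| ≤ G₀) {η : ℝ} (hη : 0 < η) :
    Real.log ((matExp ((matLog_isHermitian hX.1).sub (smul_isHermitian hG η))).trace)
      ≤ η * G₀ := by
  classical
  rcases Nat.eq_zero_or_pos n with hn | hn
  · exfalso; subst hn; simp [Matrix.trace] at hXtr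
  have hG₀ : 0 ≤ G₀ := le_trans (abs_nonneg _) (hGnorm ⟨0, hn⟩)
  set hM : (matLog hX.1 - η • G).IsHermitian :=
    (matLog_isHermitian hX.1).sub (smul_isHermitian hG η) with hMdef
  set W : Matrix (Fin n) (Fin n) ℝ := (hM.eigenvectorUnitary : Matrix (Fin n) (Fin n) ℝ) with hWdef
  set U : Matrix (Fin n) (Fin n) ℝ := (hX.1.eigenvectorUnitary : Matrix (Fin n) (Fin n) ℝ) with hUdef
  set V : Matrix (Fin n) (Fin n) ℝ := (hG.eigenvectorUnitary : Matrix (Fin n) (Fin n) ℝ) with hVdef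
  set μ : Fin n → ℝ := hM.eigenvalues with hμdef
  set lam : Fin n → ℝ := hX.1.eigenvalues with hlamdef
  set g : Fin n → ℝ := hG.eigenvalues with hgdef
  have hWW : Wᴴ * W = 1 := by
    rw [← Matrix.star_eq_conjTranspose]
    exact Matrix.mem_unitaryGroup_iff'.mp hM.eigenvectorUnitary.2
  have hWW' : W * Wᴴ = 1 := by
    rw [← Matrix.star_eq_conjTranspose]
    exact Matrix.mem_unitaryGroup_iff.mp hM.eigenvectorUnitary.2
  have hUU : U * Uᴴ = 1 := by
    rw [← Matrix.star_eq_conjTranspose]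
    exact Matrix.mem_unitaryGroup_iff.mp hX.1.eigenvectorUnitary.2
  have hUU' : Uᴴ * U = 1 := by
    rw [← Matrix.star_eq_conjTranspose]
    exact Matrix.mem_unitaryGroup_iff'.mp hX.1.eigenvectorUnitary.2
  have hVV : V * Vᴴ = 1 := by
    rw [← Matrix.star_eq_conjTranspose]
    exact Matrix.mem_unitaryGroup_iff.mp hG.eigenvectorUnitary.2
  -- trace of matExp
  have htr : (matExp hM).trace = ∑ k, Real.exp (μ k) := by
    unfold matExp
    rw [← hWdef, Matrix.trace_mul_cycle, hWW, Matrix.one_mul, Matrix.trace_diagonal, hμdef]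
  -- P and Q
  set P : Matrix (Fin n) (Fin n) ℝ := Uᴴ * W with hPdef
  set Q : Matrix (Fin n) (Fin n) ℝ := Vᴴ * W with hQdef
  have hPP : Pᴴ * P = 1 := by
    rw [hPdef, Matrix.conjTranspose_mul, Matrix.conjTranspose_conjTranspose, Matrix.mul_assoc,
      ← Matrix.mul_assoc U, hUU, Matrix.one_mul, hWW]
  have hPP' : P * Pᴴ = 1 := by
    rw [hPdef, Matrix.conjTranspose_mul, Matrix.conjTranspose_conjTranspose, Matrix.mul_assoc,
      ← Matrix.mul_assoc W, hWW', Matrix.one_mul, hUU']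
  have hQQ : Qᴴ * Q = 1 := by
    rw [hQdef, Matrix.conjTranspose_mul, Matrix.conjTranspose_conjTranspose, Matrix.mul_assoc,
      ← Matrix.mul_assoc V, hVV, Matrix.one_mul, hWW]
  -- diagonalization of M by W
  have hMdiag : Wᴴ * (matLog hX.1 - η • G) * W = Matrix.diagonal μ := by
    have := hM.conjStarAlgAut_star_eigenvectorUnitary
    simpa [Matrix.star_eq_conjTranspose, Unitary.conjStarAlgAut_star_apply] using this
  -- expand
  have hLW : Wᴴ * matLog hX.1 * W = Pᴴ * Matrix.diagonal (fun j => Real.log (lam j)) * P := by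
    unfold matLog
    simp only [hPdef, Matrix.conjTranspose_mul, Matrix.conjTranspose_conjTranspose,
      Matrix.mul_assoc]
    rfl
  have hGW : Wᴴ * G * W = Qᴴ * Matrix.diagonal g * Q := by
    conv_lhs => rw [hG.spectral_theorem]
    simp only [hQdef, Unitary.conjStarAlgAut_apply, Unitary.coe_star,
      Matrix.star_eq_conjTranspose, Matrix.conjTranspose_mul,
      Matrix.conjTranspose_conjTranspose, Matrix.mul_assoc, RCLike.ofReal_real_eq_id,
      Function.comp_def, id_eq]
    rfl
  have hμk : ∀ k, μ k = (∑ j, Real.log (lam j) * (P j k) ^ 2)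
      - η * ∑ j, g j * (Q j k) ^ 2 := by
    intro k
    have h1 : Matrix.diagonal μ k k = μ k := by simp
    rw [← h1, ← hMdiag]
    have h2 : Wᴴ * (matLog hX.1 - η • G) * W
        = Wᴴ * matLog hX.1 * W - η • (Wᴴ * G * W) := by
      rw [Matrix.mul_sub, Matrix.sub_mul, Matrix.mul_smul, Matrix.smul_mul]
    rw [h2, hLW, hGW, Matrix.sub_apply, Matrix.smul_apply, conj_diag_entry, conj_diag_entry,
      smul_eq_mul]
  -- positivity of eigenvalues of X
  have hlam_pos : ∀ j, 0 < lam j := fun j => hX.eigenvalues_pos j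
  -- Jensen per column
  have hkey : ∀ k, Real.exp (μ k) ≤ Real.exp (η * G₀) * ∑ j, (P j k) ^ 2 * lam j := by
    intro k
    have hcolP := col_sq_sum hPP k
    have hcolQ := col_sq_sum hQQ k
    have hGbound : |∑ j, g j * (Q j k) ^ 2| ≤ G₀ := by
      calc |∑ j, g j * (Q j k) ^ 2| ≤ ∑ j, |g j * (Q j k) ^ 2| := Finset.abs_sum_le_sum_abs _ _
        _ ≤ ∑ j, G₀ * (Q j k) ^ 2 := by
            apply Finset.sum_le_sum
            intro j _
            rw [abs_mul, abs_of_nonneg (sq_nonneg (Q j k))]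
            exact mul_le_mul_of_nonneg_right (hGnorm j) (sq_nonneg _)
        _ = G₀ := by rw [← Finset.mul_sum, hcolQ, mul_one]
    have hμle : μ k ≤ (∑ j, Real.log (lam j) * (P j k) ^ 2) + η * G₀ := by
      rw [hμk k]
      have : -(η * ∑ j, g j * (Q j k) ^ 2) ≤ η * G₀ := by
        rw [← mul_neg]
        exact mul_le_mul_of_nonneg_left (neg_le.mpr (abs_le.mp hGbound).1) hη.le
      linarith
    have hjensen : Real.exp (∑ j, Real.log (lam j) * (P j k) ^ 2)
        ≤ ∑ j, (P j k) ^ 2 * lam j := by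
      have h := convexOn_exp.map_sum_le (t := Finset.univ)
        (w := fun j => (P j k) ^ 2) (p := fun j => Real.log (lam j))
        (fun j _ => sq_nonneg _) hcolP (fun j _ => Set.mem_univ _)
      simp only [smul_eq_mul] at h
      calc Real.exp (∑ j, Real.log (lam j) * (P j k) ^ 2)
          = Real.exp (∑ j, (P j k) ^ 2 * Real.log (lam j)) := by
            congr 1; exact Finset.sum_congr rfl fun j _ => mul_comm _ _
        _ ≤ ∑ j, (P j k) ^ 2 * Real.exp (Real.log (lam j)) := h
        _ = ∑ j, (P j k) ^ 2 * lam j := by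
            exact Finset.sum_congr rfl fun j _ => by rw [Real.exp_log (hlam_pos j)]
    calc Real.exp (μ k) ≤ Real.exp ((∑ j, Real.log (lam j) * (P j k) ^ 2) + η * G₀) :=
          Real.exp_le_exp.mpr hμle
      _ = Real.exp (η * G₀) * Real.exp (∑ j, Real.log (lam j) * (P j k) ^ 2) := by
          rw [Real.exp_add, mul_comm]
      _ ≤ Real.exp (η * G₀) * ∑ j, (P j k) ^ 2 * lam j :=
          mul_le_mul_of_nonneg_left hjensen (Real.exp_pos _).le
  -- trace X = sum of eigenvalues
  have htrX : ∑ j, lam j = 1 := by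
    have h := congr_arg Matrix.trace hX.1.spectral_theorem
    rw [hXtr] at h
    simp only [Unitary.conjStarAlgAut_apply, Unitary.coe_star,
      Matrix.star_eq_conjTranspose, ← hUdef, ← hlamdef] at h
    rw [Matrix.trace_mul_cycle, hUU', Matrix.one_mul, Matrix.trace_diagonal] at h
    simpa using h.symm
  have hsum : ∑ k, Real.exp (μ k) ≤ Real.exp (η * G₀) := by
    calc ∑ k, Real.exp (μ k) ≤ ∑ k, Real.exp (η * G₀) * ∑ j, (P j k) ^ 2 * lam j :=
          Finset.sum_le_sum fun k _ => hkey k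
      _ = Real.exp (η * G₀) * ∑ k, ∑ j, (P j k) ^ 2 * lam j := by rw [Finset.mul_sum]
      _ = Real.exp (η * G₀) * ∑ j, (∑ k, (P j k) ^ 2) * lam j := by
          rw [Finset.sum_comm]
          congr 1
          exact Finset.sum_congr rfl fun j _ => by rw [Finset.sum_mul]
      _ = Real.exp (η * G₀) := by
          rw [show (∑ j, (∑ k, (P j k) ^ 2) * lam j) = ∑ j, lam j from
            Finset.sum_congr rfl fun j _ => by rw [row_sq_sum hPP' j, one_mul], htrX, mul_one]
  have hpos : 0 < (matExp hM).trace := by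
    rw [htr]
    exact Finset.sum_pos (fun k _ => Real.exp_pos _) ⟨⟨0, hn⟩, Finset.mem_univ _⟩
  rw [Real.log_le_iff_le_exp hpos, htr]
  exact hsum
end

section
/- Ky Fan partial sum bound via projections: for a symmetric matrix M and any n×r matrix W with orthonormal columns, -Σ_{i=1}^r λ_i(M) ≤ -Tr(W W^T M), i.e., Tr(W W^T M) ≤ Σ_{i=1}^r λ_i(M), with equality when W spans the top-r eigenspace. -/
open Matrix

/-- Key scalar inequality: a `[0,1]`-weighted sum with total weight `r` of a monotone
family is at most the sum of the top `r` values. -/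
lemma kyFan_aux {n r : ℕ} (hr : 0 < r) (hrn : r ≤ n) (g t : Fin n → ℝ) (hg : Monotone g)
    (ht0 : ∀ j, 0 ≤ t j) (ht1 : ∀ j, t j ≤ 1) (hts : ∑ j, t j = (r : ℝ)) :
    ∑ j, g j * t j ≤ ∑ j ∈ Finset.univ.filter (fun j : Fin n => n - r ≤ (j : ℕ)), g j := by
  have hn : 0 < n := lt_of_lt_of_le hr hrn
  set μ : ℝ := g ⟨n - r, by omega⟩ with hμ
  have hcard : (Finset.univ.filter (fun j : Fin n => n - r ≤ (j : ℕ))).card = r := by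
    have h1 : (Finset.univ.filter (fun j : Fin n => n - r ≤ (j : ℕ))).card
        = ∑ j : Fin n, if n - r ≤ (j : ℕ) then 1 else 0 := by
      rw [Finset.card_filter]
    rw [h1, Fin.sum_univ_eq_sum_range (fun j => if n - r ≤ j then 1 else 0) n]
    have : ∀ m, m ≤ n → ∑ j ∈ Finset.range m, (if n - r ≤ j then 1 else 0)
        = m - min m (n - r) := by
      intro m hm
      induction m with
      | zero => simp
      | succ k ih =>
        rw [Finset.sum_range_succ, ih (by omega)]
        by_cases h : n - r ≤ k <;> simp [h] <;> omega
    rw [this n le_rfl]; omega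
  have key : ∑ j, (g j - μ) * t j
      ≤ ∑ j ∈ Finset.univ.filter (fun j : Fin n => n - r ≤ (j : ℕ)), (g j - μ) := by
    rw [Finset.sum_filter]
    apply Finset.sum_le_sum
    intro j _
    by_cases h : n - r ≤ (j : ℕ)
    · have hgj : μ ≤ g j := hg (by simpa [Fin.le_def] using h)
      have := ht0 j; have := ht1 j
      simp only [h, if_true]; nlinarith
    · have hgj : g j ≤ μ := hg (by simp [Fin.le_def]; omega)
      have := ht0 j
      simp only [h, if_false]; nlinarith
  have e1 : ∑ j, g j * t j = ∑ j, (g j - μ) * t j + μ * r := by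
    rw [← hts, Finset.mul_sum, ← Finset.sum_add_distrib]
    congr 1; ext j; ring
  have e2 : ∑ j ∈ Finset.univ.filter (fun j : Fin n => n - r ≤ (j : ℕ)), g j
      = ∑ j ∈ Finset.univ.filter (fun j : Fin n => n - r ≤ (j : ℕ)), (g j - μ) + μ * r := by
    rw [Finset.sum_sub_distrib, Finset.sum_const, hcard]
    ring
  rw [e1, e2]
  linarith

/-- Ky Fan partial sum bound via projections: for symmetric `M` and any
`n×r` matrix `W` with orthonormal columns, `Tr(W Wᵀ M) ≤ ∑_{i=1}^r λ_i(M)`. -/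
theorem kyFan_projection_bound {n r : ℕ} (hrn : r ≤ n)
    {M : Matrix (Fin n) (Fin n) ℝ} (hM : M.IsHermitian)
    (W : Matrix (Fin n) (Fin r) ℝ) (hW : Wᵀ * W = 1) :
    (W * Wᵀ * M).trace
      ≤ ∑ i ∈ Finset.univ.filter (fun i : Fin n => (i : ℕ) < r), eigDesc hM i := by
  rcases Nat.eq_zero_or_pos r with hr | hr
  · subst hr
    have hWW : W * Wᵀ = 0 := by
      ext i j; simp [mul_apply]
    rw [hWW, Matrix.zero_mul, Matrix.trace_zero]
    have : Finset.univ.filter (fun i : Fin n => (i : ℕ) < 0) = ∅ := by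
      ext i; simp
    simp [this]
  set U : Matrix (Fin n) (Fin n) ℝ := (hM.eigenvectorUnitary : Matrix (Fin n) (Fin n) ℝ) with hU
  set f : Fin n → ℝ := hM.eigenvalues with hf
  have hspec : M = U * diagonal f * Uᵀ := by
    have h := hM.spectral_theorem
    simpa [hU, hf, Matrix.star_eq_conjTranspose, conjTranspose_eq_transpose_of_trivial] using h
  have hUU : U * Uᵀ = 1 := by
    have := (Matrix.mem_unitaryGroup_iff).mp hM.eigenvectorUnitary.2
    simpa [hU, Matrix.star_eq_conjTranspose, conjTranspose_eq_transpose_of_trivial] using this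
  set V : Matrix (Fin n) (Fin r) ℝ := Uᵀ * W with hV
  have hVt : Vᵀ = Wᵀ * U := by rw [hV, transpose_mul, transpose_transpose]
  have hVtV : Vᵀ * V = 1 := by
    rw [hVt, hV, Matrix.mul_assoc, ← Matrix.mul_assoc U, hUU, Matrix.one_mul, hW]
  set s : Fin n → ℝ := fun j => ∑ k, V j k ^ 2 with hs
  -- trace computation
  have hmid : Wᵀ * (U * diagonal f * Uᵀ) * W = Vᵀ * diagonal f * V := by
    rw [hVt, hV]; simp only [Matrix.mul_assoc]
  have htr : (W * Wᵀ * M).trace = ∑ j, f j * s j := by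
    rw [Matrix.mul_assoc, Matrix.trace_mul_comm, hspec, hmid]
    rw [Matrix.trace, Matrix.mul_assoc]
    simp only [Matrix.diag, Matrix.mul_apply, Matrix.transpose_apply, Matrix.diagonal_apply,
      ite_mul, zero_mul, Finset.sum_ite_eq, Finset.mem_univ, if_true]
    rw [Finset.sum_comm]
    apply Finset.sum_congr rfl
    intro j _
    rw [hs, Finset.mul_sum]
    apply Finset.sum_congr rfl
    intro k _
    ring
  -- properties of s
  have hs0 : ∀ j, 0 ≤ s j := fun j => Finset.sum_nonneg fun k _ => sq_nonneg _
  have hsum : ∑ j, s j = (r : ℝ) := by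
    have h1 : (Vᵀ * V).trace = (r : ℝ) := by rw [hVtV]; simp
    rw [← h1, Matrix.trace]
    simp only [Matrix.diag, Matrix.mul_apply, Matrix.transpose_apply]
    rw [Finset.sum_comm]
    simp [hs, sq]
  have hs1 : ∀ j, s j ≤ 1 := by
    intro j
    set P : Matrix (Fin n) (Fin n) ℝ := V * Vᵀ with hP
    have hPP : P * P = P := by
      calc P * P = V * (Vᵀ * V) * Vᵀ := by simp only [hP, Matrix.mul_assoc]
        _ = P := by rw [hVtV, Matrix.mul_one, hP]
    have hPjj : P j j = s j := by simp [hP, Matrix.mul_apply, hs, sq]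
    have hsym : ∀ a b, P a b = P b a := by
      intro a b
      simp only [hP, Matrix.mul_apply, Matrix.transpose_apply]
      exact Finset.sum_congr rfl fun k _ => mul_comm _ _
    have h2 : s j = ∑ k, (P j k) ^ 2 := by
      conv_lhs => rw [← hPjj, ← hPP]
      rw [Matrix.mul_apply]
      refine Finset.sum_congr rfl fun k _ => ?_
      rw [hsym k j]; ring
    have h3 : (s j) ^ 2 ≤ s j := by
      calc (s j) ^ 2 = (P j j) ^ 2 := by rw [hPjj]
        _ ≤ ∑ k, (P j k) ^ 2 :=
            Finset.single_le_sum (fun k _ => sq_nonneg (P j k)) (Finset.mem_univ j)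
        _ = s j := h2.symm
    nlinarith [hs0 j]
  -- rearrangement
  set σ : Equiv.Perm (Fin n) := Tuple.sort f with hσ
  set g : Fin n → ℝ := f ∘ σ with hg
  set t : Fin n → ℝ := fun j => s (σ j) with ht
  have hgt : ∑ j, g j * t j = ∑ j, f j * s j := Equiv.sum_comp σ (fun j => f j * s j)
  have hts : ∑ j, t j = (r : ℝ) := by rw [← hsum]; exact Equiv.sum_comp σ s
  have main := kyFan_aux hr hrn g t (Tuple.monotone_sort f) (fun j => hs0 _) (fun j => hs1 _) hts
  have hbij : ∑ i ∈ Finset.univ.filter (fun i : Fin n => (i : ℕ) < r), eigDesc hM i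
      = ∑ j ∈ Finset.univ.filter (fun j : Fin n => n - r ≤ (j : ℕ)), g j := by
    refine Finset.sum_bij' (fun i _ => Fin.rev i) (fun j _ => Fin.rev j) ?_ ?_ ?_ ?_ ?_
    · intro i hi
      simp only [Finset.mem_filter, Finset.mem_univ, true_and, Fin.val_rev] at hi ⊢
      have := i.isLt; omega
    · intro j hj
      simp only [Finset.mem_filter, Finset.mem_univ, true_and, Fin.val_rev] at hj ⊢
      have := j.isLt; omega
    · intro i _; exact Fin.rev_rev i
    · intro j _; exact Fin.rev_rev j
    · intro i _; rfl
  rw [htr, hbij, ← hgt]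
  exact main
end
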